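/- Let 0 < b < a ≤ 1 be real numbers. Then (a − b)·(1/(ab) + 1/(b+1)) < ψ(a) − ψ(b) < (a − b)·(1/(ab) + π²/6). Moreover, if additionally a, b > 1/2, then ψ(a) − ψ(b) < (a − b)·(1/(ab) + π²/6 − 5/9). -/

import Mathlib

open scoped Real

open Set Filter

/-- The digamma function `ψ(x) = Γ'(x)/Γ(x)`. -/
noncomputable def digamma (x : ℝ) : ℝ := deriv Real.Gamma x / Real.Gamma x

lemma Gamma_hasDerivAt' {x : ℝ} (hx : 0 < x) :
    HasDerivAt Real.Gamma (deriv Real.Gamma x) x :=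
  (Real.differentiableAt_Gamma
    (fun m => ne_of_gt (by have : (0:ℝ) ≤ m := Nat.cast_nonneg m; linarith))).hasDerivAt

lemma digamma_add_one {x : ℝ} (hx : 0 < x) : digamma (x + 1) = digamma x + 1/x := by
  have hΓ := Real.Gamma_pos_of_pos hx
  have hd := Gamma_hasDerivAt' hx
  have h1 : HasDerivAt (fun y => Real.Gamma (y + 1)) (deriv Real.Gamma (x+1)) x := by
    have := (Gamma_hasDerivAt' (by linarith : (0:ℝ) < x + 1)).comp x
      ((hasDerivAt_id x).add_const 1)
    simp at this; exact this
  have h2 : HasDerivAt (fun y => y * Real.Gamma y)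
      (Real.Gamma x + x * deriv Real.Gamma x) x := by
    exact ((hasDerivAt_id' x).mul hd).congr_deriv (by ring)
  have heq : (fun y => Real.Gamma (y + 1)) =ᶠ[nhds x] (fun y => y * Real.Gamma y) := by
    filter_upwards [eventually_ne_nhds hx.ne'] with y hy
    exact Real.Gamma_add_one hy
  have h3 : deriv Real.Gamma (x+1) = Real.Gamma x + x * deriv Real.Gamma x := by
    have := h1.congr_of_eventuallyEq heq.symm
    exact this.unique h2
  rw [digamma, digamma, h3, Real.Gamma_add_one hx.ne']
  field_simp
  ring

lemma logGamma_hasDerivAt {x : ℝ} (hx : 0 < x) :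
    HasDerivAt (Real.log ∘ Real.Gamma) (digamma x) x :=
  (Gamma_hasDerivAt' hx).log (Real.Gamma_pos_of_pos hx).ne'

lemma digamma_mono {x y : ℝ} (hx : 0 < x) (hxy : x ≤ y) : digamma x ≤ digamma y := by
  have hy : 0 < y := lt_of_lt_of_le hx hxy
  have h := Real.convexOn_log_Gamma.monotoneOn_deriv
    (fun z hz => (logGamma_hasDerivAt hz).differentiableAt)
    (mem_Ioi.2 hx) (mem_Ioi.2 hy) hxy
  rwa [(logGamma_hasDerivAt hx).deriv, (logGamma_hasDerivAt hy).deriv] at h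

lemma digamma_shift {x : ℝ} (hx : 0 < x) (N : ℕ) :
    digamma (x + N) = digamma x + ∑ n ∈ Finset.range N, 1/(x + n) := by
  induction N with
  | zero => simp
  | succ N ih =>
    have hxN : 0 < x + N := by positivity
    have h : (x + ((N:ℕ)+1:ℕ) : ℝ) = (x + N) + 1 := by push_cast; ring
    rw [h, digamma_add_one hxN, ih, Finset.sum_range_succ]
    ring

lemma digamma_sub_hasSum {a b : ℝ} (hb : 0 < b) (hba : b < a) (hab : a ≤ b + 1) :
    HasSum (fun n : ℕ => (a-b)/((n+a)*(n+b))) (digamma a - digamma b) := by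
  have ha : 0 < a := hb.trans hba
  rw [hasSum_iff_tendsto_nat_of_nonneg (fun n => div_nonneg (by linarith) (by positivity))]
  have key : ∀ N : ℕ, ∑ n ∈ Finset.range N, (a-b)/((n+a)*(n+b))
      = (digamma a - digamma b) - (digamma (a+N) - digamma (b+N)) := by
    intro N
    have hcong : ∀ n ∈ Finset.range N, (a-b)/((n+a)*(n+b)) = 1/(b+n) - 1/(a+n) := by
      intro n _
      have h1 : (0:ℝ) < a + n := by positivity
      have h2 : (0:ℝ) < b + n := by positivity
      rw [div_sub_div _ _ h2.ne' h1.ne']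
      rw [div_eq_div_iff (by positivity) (by positivity)]
      ring
    rw [digamma_shift ha N, digamma_shift hb N, Finset.sum_congr rfl hcong,
      Finset.sum_sub_distrib]
    ring
  simp only [key]
  have htail : Tendsto (fun N : ℕ => digamma (a+N) - digamma (b+N)) atTop (nhds 0) := by
    have hub : Tendsto (fun N : ℕ => 1/(b+N)) atTop (nhds 0) := by
      simp only [one_div]
      exact (tendsto_atTop_add_const_left atTop b
        tendsto_natCast_atTop_atTop).inv_tendsto_atTop
    apply squeeze_zero (fun N => ?_) (fun N => ?_) hub
    · have hN : 0 < b + N := by positivity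
      have := digamma_mono hN (by linarith : b + (N:ℝ) ≤ a + N)
      linarith
    · have h2 : 0 < b + N := by positivity
      have hle : a + (N:ℝ) ≤ (b + N) + 1 := by linarith
      have h4 := digamma_mono (show (0:ℝ) < a + N by positivity) hle
      rw [digamma_add_one h2] at h4
      linarith
  simpa using tendsto_const_nhds.sub htail

lemma hasSum_telescope' {c : ℝ} (hc : 0 < c) :
    HasSum (fun n : ℕ => 1/(((n:ℝ)+c)*((n:ℝ)+c+1))) (1/c) := by
  rw [hasSum_iff_tendsto_nat_of_nonneg (fun n => by positivity)]
  have key : ∀ n : ℕ, 1/(((n:ℝ)+c)*((n:ℝ)+c+1)) = 1/((n:ℝ)+c) - 1/(((n+1:ℕ):ℝ)+c) := by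
    intro n
    have h1 : (0:ℝ) < n + c := by positivity
    have h2 : (0:ℝ) < (n:ℝ) + c + 1 := by positivity
    rw [div_sub_div _ _ h1.ne' (by push_cast; linarith)]
    rw [div_eq_div_iff (by positivity) (by push_cast; positivity)]
    push_cast; ring
  simp only [key, Finset.sum_range_sub' (fun n : ℕ => 1/((n:ℝ)+c))]
  have h : Tendsto (fun N : ℕ => 1/((N:ℝ)+c)) atTop (nhds 0) := by
    simp only [one_div]
    exact (tendsto_atTop_add_const_right atTop c tendsto_natCast_atTop_atTop).inv_tendsto_atTop
  simpa using (tendsto_const_nhds.sub h)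

lemma hasSum_inv_sq_shift1 : HasSum (fun n : ℕ => 1/((n:ℝ)+1)^2) (π^2/6) := by
  have h : HasSum (fun n : ℕ => (1:ℝ)/(n:ℝ)^2) (π^2/6 + ∑ i ∈ Finset.range 1, (1:ℝ)/(i:ℝ)^2) := by
    simpa using hasSum_zeta_two
  have := (hasSum_nat_add_iff (f := fun n : ℕ => (1:ℝ)/(n:ℝ)^2) 1).mpr h
  simpa [add_comm] using this

lemma hasSum_inv_sq_shift2 : HasSum (fun n : ℕ => 1/((n:ℝ)+2)^2) (π^2/6 - 1) := by
  have h : HasSum (fun n : ℕ => (1:ℝ)/(n:ℝ)^2)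
      ((π^2/6 - 1) + ∑ i ∈ Finset.range 2, (1:ℝ)/(i:ℝ)^2) := by
    have h2 : ∑ i ∈ Finset.range 2, (1:ℝ)/(i:ℝ)^2 = 1 := by
      norm_num [Finset.sum_range_succ]
    rw [h2]; simpa using hasSum_zeta_two
  have := (hasSum_nat_add_iff (f := fun n : ℕ => (1:ℝ)/(n:ℝ)^2) 2).mpr h
  simpa [add_comm] using this

theorem stmt17 (a b : ℝ) (hb : 0 < b) (hba : b < a) (ha : a ≤ 1) :
    ((a - b) * (1/(a*b) + 1/(b+1)) < digamma a - digamma b ∧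
      digamma a - digamma b < (a - b) * (1/(a*b) + π^2/6)) ∧
    (1/2 < a → 1/2 < b →
      digamma a - digamma b < (a - b) * (1/(a*b) + π^2/6 - 5/9)) := by
  have ha0 : 0 < a := hb.trans hba
  have hd : 0 < a - b := by linarith
  set F : ℕ → ℝ := fun n => (a-b)/((n+a)*(n+b)) with hFdef
  have hF : HasSum F (digamma a - digamma b) :=
    digamma_sub_hasSum hb hba (by linarith)
  set S := digamma a - digamma b with hS
  have hF0 : F 0 = (a-b)/(a*b) := by simp [hFdef]
  have hF1val : F 1 = (a-b)/((1+a)*(1+b)) := by norm_num [hFdef]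
  have hF1 : HasSum (fun n => F (n+1)) (S - F 0) := by
    refine (hasSum_nat_add_iff (f := F) 1).mpr ?_
    simpa using hF
  have hF2 : HasSum (fun n => F (n+2)) (S - F 0 - F 1) := by
    refine (hasSum_nat_add_iff (f := F) 2).mpr ?_
    have : S - F 0 - F 1 + ∑ i ∈ Finset.range 2, F i = S := by
      rw [Finset.sum_range_succ, Finset.sum_range_one]; ring
    rwa [this]
  -- Lower bound
  have hlow : (a-b) * (1/(b+1)) < S - F 0 := by
    refine hasSum_lt (i := 0) (f := fun n : ℕ => (a-b) * (1/(((n:ℝ)+(b+1))*((n:ℝ)+(b+1)+1))))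
      (fun n => ?_) ?_ ((hasSum_telescope' (by linarith : (0:ℝ) < b+1)).mul_left (a-b)) hF1
    · have h1 : (0:ℝ) < ((n:ℕ):ℝ)+1+a := by positivity
      have h2 : (0:ℝ) < ((n:ℕ):ℝ)+1+b := by positivity
      have hD1 : (0:ℝ) < (((n:ℕ):ℝ)+1+a)*(((n:ℕ):ℝ)+1+b) := by positivity
      have hD12 : (((n:ℕ):ℝ)+1+a)*(((n:ℕ):ℝ)+1+b)
          ≤ (((n:ℕ):ℝ)+(b+1))*(((n:ℕ):ℝ)+(b+1)+1) := by nlinarith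
      have := div_le_div_of_nonneg_left hd.le hD1 hD12
      calc (a-b) * (1/(((n:ℝ)+(b+1))*((n:ℝ)+(b+1)+1)))
          = (a-b)/(((n:ℝ)+(b+1))*((n:ℝ)+(b+1)+1)) := by rw [mul_one_div]
        _ ≤ (a-b)/((((n:ℕ):ℝ)+1+a)*(((n:ℕ):ℝ)+1+b)) := this
        _ = F (n+1) := by rw [hFdef]; push_cast; ring_nf
    · -- strict at n = 0
      have hD1 : (0:ℝ) < (1+a)*(1+b) := by positivity
      have hD12 : (1+a)*(1+b) < (b+1)*(b+2) := by nlinarith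
      have h := div_lt_div_of_pos_left hd hD1 hD12
      have e1 : (a-b) * (1/((((0:ℕ):ℝ)+(b+1))*(((0:ℕ):ℝ)+(b+1)+1))) = (a-b)/((b+1)*(b+2)) := by
        push_cast; rw [mul_one_div]; ring_nf
      have e2 : F (0+1) = (a-b)/((1+a)*(1+b)) := hF1val
      beta_reduce
      rw [e1, e2]; exact h
  -- Upper bound 1
  have hup : S - F 0 < (a-b) * (π^2/6) := by
    refine hasSum_lt (i := 0) (g := fun n : ℕ => (a-b) * (1/((n:ℝ)+1)^2))
      (fun n => ?_) ?_ hF1 (hasSum_inv_sq_shift1.mul_left (a-b))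
    · have hD2 : (0:ℝ) < ((n:ℝ)+1)^2 := by positivity
      have hD21 : ((n:ℝ)+1)^2 ≤ (((n:ℕ):ℝ)+1+a)*(((n:ℕ):ℝ)+1+b) := by nlinarith
      have := div_le_div_of_nonneg_left hd.le hD2 hD21
      calc F (n+1) = (a-b)/((((n:ℕ):ℝ)+1+a)*(((n:ℕ):ℝ)+1+b)) := by
            rw [hFdef]; push_cast; ring_nf
        _ ≤ (a-b)/(((n:ℝ)+1)^2) := this
        _ = (a-b) * (1/((n:ℝ)+1)^2) := by rw [mul_one_div]
    · have hD1 : (0:ℝ) < (1+a)*(1+b) := by positivity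
      have hD21 : ((0:ℝ)+1)^2 < (1+a)*(1+b) := by nlinarith
      have h := div_lt_div_of_pos_left hd (by positivity : (0:ℝ) < ((0:ℝ)+1)^2) hD21
      have e2 : F (0+1) = (a-b)/((1+a)*(1+b)) := hF1val
      beta_reduce
      rw [e2]
      calc (a-b)/((1+a)*(1+b)) < (a-b)/(((0:ℝ)+1)^2) := h
        _ = (a-b) * (1/(((0:ℕ):ℝ)+1)^2) := by push_cast; rw [mul_one_div]
  constructor
  · constructor
    · have : (a-b) * (1/(a*b) + 1/(b+1)) = F 0 + (a-b)*(1/(b+1)) := by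
        rw [hF0]; ring
      linarith
    · have : (a-b) * (1/(a*b) + π^2/6) = F 0 + (a-b)*(π^2/6) := by
        rw [hF0]; ring
      linarith
  · intro ha2 hb2
    -- F 1 < (a-b)*(4/9)
    have hf1 : F 1 < (a-b)*(4/9) := by
      have hD1 : (0:ℝ) < (1+a)*(1+b) := by positivity
      have h94 : (9:ℝ)/4 < (1+a)*(1+b) := by nlinarith
      have h := div_lt_div_of_pos_left hd (by norm_num : (0:ℝ) < (9:ℝ)/4) h94
      rw [hF1val]
      calc (a-b)/((1+a)*(1+b)) < (a-b)/((9:ℝ)/4) := h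
        _ = (a-b)*(4/9) := by ring
    -- tail : S - F 0 - F 1 < (a-b)*(π²/6 - 1)
    have htail : S - F 0 - F 1 < (a-b)*(π^2/6 - 1) := by
      refine hasSum_lt (i := 0) (g := fun n : ℕ => (a-b) * (1/((n:ℝ)+2)^2))
        (fun n => ?_) ?_ hF2 (hasSum_inv_sq_shift2.mul_left (a-b))
      · have hD2 : (0:ℝ) < ((n:ℝ)+2)^2 := by positivity
        have hD21 : ((n:ℝ)+2)^2 ≤ (((n:ℕ):ℝ)+2+a)*(((n:ℕ):ℝ)+2+b) := by nlinarith
        have := div_le_div_of_nonneg_left hd.le hD2 hD21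
        calc F (n+2) = (a-b)/((((n:ℕ):ℝ)+2+a)*(((n:ℕ):ℝ)+2+b)) := by
              rw [hFdef]; push_cast; ring_nf
          _ ≤ (a-b)/(((n:ℝ)+2)^2) := this
          _ = (a-b) * (1/((n:ℝ)+2)^2) := by rw [mul_one_div]
      · have hD21 : ((0:ℝ)+2)^2 < (2+a)*(2+b) := by nlinarith
        have h := div_lt_div_of_pos_left hd (by norm_num : (0:ℝ) < ((0:ℝ)+2)^2) hD21
        have e2 : F (0+2) = (a-b)/((2+a)*(2+b)) := by norm_num [hFdef]
        beta_reduce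
        rw [e2]
        calc (a-b)/((2+a)*(2+b)) < (a-b)/(((0:ℝ)+2)^2) := h
          _ = (a-b) * (1/(((0:ℕ):ℝ)+2)^2) := by push_cast; rw [mul_one_div]
    have : (a-b) * (1/(a*b) + π^2/6 - 5/9) = F 0 + (a-b)*(4/9) + (a-b)*(π^2/6 - 1) := by
      rw [hF0]; ring
    linarith
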